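/- Let E be a finite-dimensional complex inner product space, let T : E →ₗ[ℂ] E be a symmetric linear map, let λ ∈ ℝ and ε ≥ 0, and let u, v ∈ E be unit vectors with ⟪u, v⟫ = 0, ‖T u − (λ : ℂ) • u‖ ≤ ε and ‖T v − (λ : ℂ) • v‖ ≤ ε. Then the subspace ⨆_{μ ∈ ℝ, |μ − λ| ≤ √2·ε} eigenspace(T, μ) (the span of all eigenspaces of T for eigenvalues within √2·ε of λ) has dimension at least 2. -/

import Mathlib

set_option maxHeartbeats 1000000

lemma aux_mul_lt {a b : ℝ} (ha : 0 ≤ a) (hb : 0 ≤ b) (ha' : a < 1/2) (hb' : b < 1/2) :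
    a * b < 1/4 := by nlinarith

lemma aux_lt_mul {a b : ℝ} (ha : 1/2 < a) (hb : 1/2 < b) : 1/4 < a * b := by nlinarith

/-- Squared norms of coordinates of a Euclidean vector sum to the squared norm. -/
lemma euclid_sum_sq {n : ℕ} (w : EuclideanSpace ℂ (Fin n)) :
    ∑ i, ‖w i‖ ^ 2 = ‖w‖ ^ 2 := by
  rw [EuclideanSpace.norm_eq, Real.sq_sqrt]
  positivity

theorem two_orthogonal_approximate_eigenvectors
    {E : Type*} [NormedAddCommGroup E] [InnerProductSpace ℂ E] [FiniteDimensional ℂ E]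
    (T : E →ₗ[ℂ] E) (hT : LinearMap.IsSymmetric T)
    (lam ε : ℝ) (hε : 0 ≤ ε) (u v : E)
    (hu : ‖u‖ = 1) (hv : ‖v‖ = 1) (huv : (inner ℂ u v : ℂ) = 0)
    (hTu : ‖T u - (lam : ℂ) • u‖ ≤ ε) (hTv : ‖T v - (lam : ℂ) • v‖ ≤ ε) :
    2 ≤ Module.finrank ℂ
      ↥(⨆ μ : {μ : ℝ // |μ - lam| ≤ Real.sqrt 2 * ε},
          Module.End.eigenspace (T : Module.End ℂ E) ((μ : ℝ) : ℂ)) := by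
  classical
  set n := Module.finrank ℂ E with hn'
  have hn : Module.finrank ℂ E = n := rfl
  set b := hT.eigenvectorBasis hn with hb
  set μ := hT.eigenvalues hn with hμ
  set F := (⨆ μ' : {μ' : ℝ // |μ' - lam| ≤ Real.sqrt 2 * ε},
      Module.End.eigenspace (T : Module.End ℂ E) ((μ' : ℝ) : ℂ)) with hF
  set S : Finset (Fin n) := Finset.univ.filter (fun i => |μ i - lam| ≤ Real.sqrt 2 * ε) with hS
  -- repr of T w - lam • w
  have hrepr : ∀ w : E, ∀ i, b.repr (T w - (lam : ℂ) • w) i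
      = ((μ i - lam : ℝ) : ℂ) * b.repr w i := by
    intro w i
    rw [map_sub, map_smul]
    have := hT.eigenvectorBasis_apply_self_apply hn w i
    simp only [← hb, ← hμ] at this
    simp [this, PiLp.sub_apply, PiLp.smul_apply, smul_eq_mul]
    push_cast
    ring
  -- the residual mass outside S is < 1/2
  have key : ∀ w : E, ‖w‖ = 1 → ‖T w - (lam : ℂ) • w‖ ≤ ε →
      ∑ i ∈ Sᶜ, ‖b.repr w i‖ ^ 2 < 1 / 2 := by
    intro w hw hTw
    by_cases hz : ∀ i ∈ Sᶜ, b.repr w i = 0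
    · have : ∑ i ∈ Sᶜ, ‖b.repr w i‖ ^ 2 = 0 :=
        Finset.sum_eq_zero fun i hi => by rw [hz i hi]; simp
      rw [this]; norm_num
    · push_neg at hz
      obtain ⟨i0, hi0, hi0'⟩ := hz
      have hgap : ∀ i ∈ Sᶜ, 2 * ε ^ 2 < (μ i - lam) ^ 2 := by
        intro i hi
        have h1 : Real.sqrt 2 * ε < |μ i - lam| := by
          have := Finset.mem_compl.mp hi
          simp only [hS, Finset.mem_filter, Finset.mem_univ, true_and] at this
          exact lt_of_not_ge this
        have h0 : 0 ≤ Real.sqrt 2 * ε := by positivity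
        have h2 : (Real.sqrt 2 * ε) ^ 2 < (μ i - lam) ^ 2 := by
          nlinarith [abs_nonneg (μ i - lam), sq_abs (μ i - lam)]
        calc 2 * ε ^ 2 = (Real.sqrt 2 * ε) ^ 2 := by
              rw [mul_pow, Real.sq_sqrt (by norm_num : (0:ℝ) ≤ 2)]
          _ < _ := h2
      have hsum_le : ∑ i, (μ i - lam) ^ 2 * ‖b.repr w i‖ ^ 2 ≤ ε ^ 2 := by
        have h1 : ∑ i, ‖b.repr (T w - (lam : ℂ) • w) i‖ ^ 2
            = ‖T w - (lam : ℂ) • w‖ ^ 2 := by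
          rw [euclid_sum_sq, b.repr.norm_map]
        have h2 : ∀ i, ‖b.repr (T w - (lam : ℂ) • w) i‖ ^ 2
            = (μ i - lam) ^ 2 * ‖b.repr w i‖ ^ 2 := by
          intro i
          rw [hrepr w i, norm_mul, mul_pow, Complex.norm_real, Real.norm_eq_abs, sq_abs]
        rw [← Finset.sum_congr rfl (fun i _ => h2 i), h1]
        have := norm_nonneg (T w - (lam : ℂ) • w)
        nlinarith
      have hstrict : 2 * ε ^ 2 * ∑ i ∈ Sᶜ, ‖b.repr w i‖ ^ 2
          < ∑ i ∈ Sᶜ, (μ i - lam) ^ 2 * ‖b.repr w i‖ ^ 2 := by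
        rw [Finset.mul_sum]
        refine Finset.sum_lt_sum (fun i hi => ?_) ⟨i0, hi0, ?_⟩
        · exact mul_le_mul_of_nonneg_right (hgap i hi).le (by positivity)
        · have : (0:ℝ) < ‖b.repr w i0‖ ^ 2 := by
            have := norm_pos_iff.mpr hi0'
            positivity
          exact mul_lt_mul_of_pos_right (hgap i0 hi0) this
      have h3 : ∑ i ∈ Sᶜ, (μ i - lam) ^ 2 * ‖b.repr w i‖ ^ 2
          ≤ ∑ i, (μ i - lam) ^ 2 * ‖b.repr w i‖ ^ 2 :=
        Finset.sum_le_sum_of_subset_of_nonneg (Finset.subset_univ _)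
          (fun i _ _ => by positivity)
      have hε' : 0 < ε := by
        rcases lt_or_eq_of_le hε with h | h
        · exact h
        · exfalso
          have := hstrict.trans_le (h3.trans hsum_le)
          have hnn : 0 ≤ ∑ i ∈ Sᶜ, ‖b.repr w i‖ ^ 2 :=
            Finset.sum_nonneg (fun i _ => by positivity)
          nlinarith
      nlinarith [hstrict.trans_le (h3.trans hsum_le)]
  -- the truncated coordinate vectors
  set x : EuclideanSpace ℂ (Fin n) := b.repr u with hx
  set y : EuclideanSpace ℂ (Fin n) := b.repr v with hy
  set x₁ : EuclideanSpace ℂ (Fin n) := WithLp.toLp 2 (fun i => if i ∈ S then x i else 0) with hx₁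
  set y₁ : EuclideanSpace ℂ (Fin n) := WithLp.toLp 2 (fun i => if i ∈ S then y i else 0) with hy₁
  set x₂ : EuclideanSpace ℂ (Fin n) := WithLp.toLp 2 (fun i => if i ∈ S then 0 else x i) with hx₂
  set y₂ : EuclideanSpace ℂ (Fin n) := WithLp.toLp 2 (fun i => if i ∈ S then 0 else y i) with hy₂
  set u' : E := b.repr.symm x₁ with hu'
  set v' : E := b.repr.symm y₁ with hv'
  -- membership in F
  have hmemF : ∀ z : EuclideanSpace ℂ (Fin n), (∀ i, i ∉ S → z i = 0) →
      b.repr.symm z ∈ F := by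
    intro z hz
    rw [← b.sum_repr_symm]
    refine Submodule.sum_mem _ (fun i _ => ?_)
    by_cases hiS : i ∈ S
    · refine Submodule.smul_mem _ _ ?_
      have hbmem : b i ∈ Module.End.eigenspace (T : Module.End ℂ E) ((μ i : ℝ) : ℂ) :=
        (hT.hasEigenvector_eigenvectorBasis hn i).1
      have hSi : |μ i - lam| ≤ Real.sqrt 2 * ε := by
        have := hiS
        simp only [hS, Finset.mem_filter, Finset.mem_univ, true_and] at this
        exact this
      exact (le_iSup (fun μ' : {μ' : ℝ // |μ' - lam| ≤ Real.sqrt 2 * ε} =>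
        Module.End.eigenspace (T : Module.End ℂ E) ((μ' : ℝ) : ℂ)) ⟨μ i, hSi⟩) hbmem
    · rw [hz i hiS, zero_smul]
      exact Submodule.zero_mem _
  have hu'F : u' ∈ F := hmemF x₁ (fun i hi => by simp [hx₁, hi])
  have hv'F : v' ∈ F := hmemF y₁ (fun i hi => by simp [hy₁, hi])
  -- norms
  have hxsum : ∑ i, ‖x i‖ ^ 2 = 1 := by
    rw [euclid_sum_sq, hx, b.repr.norm_map, hu]; norm_num
  have hysum : ∑ i, ‖y i‖ ^ 2 = 1 := by
    rw [euclid_sum_sq, hy, b.repr.norm_map, hv]; norm_num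
  have hxres : ∑ i ∈ Sᶜ, ‖x i‖ ^ 2 < 1 / 2 := key u hu hTu
  have hyres : ∑ i ∈ Sᶜ, ‖y i‖ ^ 2 < 1 / 2 := key v hv hTv
  have hsplit : ∀ z : EuclideanSpace ℂ (Fin n),
      ∑ i ∈ S, ‖z i‖ ^ 2 + ∑ i ∈ Sᶜ, ‖z i‖ ^ 2 = ∑ i, ‖z i‖ ^ 2 := by
    intro z
    rw [Finset.sum_add_sum_compl]
  have hu'norm : 1 / 2 < ‖u'‖ ^ 2 := by
    have h1 : ‖u'‖ ^ 2 = ∑ i ∈ S, ‖x i‖ ^ 2 := by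
      rw [hu', b.repr.symm.norm_map, ← euclid_sum_sq x₁]
      rw [← Finset.sum_add_sum_compl S fun i => ‖x₁ i‖ ^ 2]
      have e1 : ∑ i ∈ S, ‖x₁ i‖ ^ 2 = ∑ i ∈ S, ‖x i‖ ^ 2 :=
        Finset.sum_congr rfl (fun i hi => by simp [hx₁, hi])
      have e2 : ∑ i ∈ Sᶜ, ‖x₁ i‖ ^ 2 = 0 :=
        Finset.sum_eq_zero (fun i hi => by
          simp [hx₁, (Finset.mem_compl.mp hi)])
      rw [e1, e2, add_zero]
    rw [h1]
    have := hsplit x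
    rw [hxsum] at this
    linarith
  have hv'norm : 1 / 2 < ‖v'‖ ^ 2 := by
    have h1 : ‖v'‖ ^ 2 = ∑ i ∈ S, ‖y i‖ ^ 2 := by
      rw [hv', b.repr.symm.norm_map, ← euclid_sum_sq y₁]
      rw [← Finset.sum_add_sum_compl S fun i => ‖y₁ i‖ ^ 2]
      have e1 : ∑ i ∈ S, ‖y₁ i‖ ^ 2 = ∑ i ∈ S, ‖y i‖ ^ 2 :=
        Finset.sum_congr rfl (fun i hi => by simp [hy₁, hi])
      have e2 : ∑ i ∈ Sᶜ, ‖y₁ i‖ ^ 2 = 0 :=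
        Finset.sum_eq_zero (fun i hi => by
          simp [hy₁, (Finset.mem_compl.mp hi)])
      rw [e1, e2, add_zero]
    rw [h1]
    have := hsplit y
    rw [hysum] at this
    linarith
  -- inner products
  have hxy : (inner ℂ x y : ℂ) = 0 := by
    rw [hx, hy, b.repr.inner_map_map, huv]
  have hinner_split : (inner ℂ x₁ y₁ : ℂ) + (inner ℂ x₂ y₂ : ℂ) = inner ℂ x y := by
    simp only [PiLp.inner_apply, RCLike.inner_apply]
    rw [← Finset.sum_add_distrib]
    refine Finset.sum_congr rfl (fun i _ => ?_)
    by_cases hi : i ∈ S <;> simp [hx₁, hy₁, hx₂, hy₂, hi]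
  have hinner_u'v' : (inner ℂ u' v' : ℂ) = inner ℂ x₁ y₁ := by
    rw [hu', hv', b.repr.symm.inner_map_map]
  have hx₂norm : ‖x₂‖ ^ 2 = ∑ i ∈ Sᶜ, ‖x i‖ ^ 2 := by
    rw [← euclid_sum_sq x₂, ← Finset.sum_add_sum_compl S fun i => ‖x₂ i‖ ^ 2]
    have e1 : ∑ i ∈ S, ‖x₂ i‖ ^ 2 = 0 :=
      Finset.sum_eq_zero (fun i hi => by simp [hx₂, hi])
    have e2 : ∑ i ∈ Sᶜ, ‖x₂ i‖ ^ 2 = ∑ i ∈ Sᶜ, ‖x i‖ ^ 2 :=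
      Finset.sum_congr rfl (fun i hi => by simp [hx₂, (Finset.mem_compl.mp hi)])
    rw [e1, e2, zero_add]
  have hy₂norm : ‖y₂‖ ^ 2 = ∑ i ∈ Sᶜ, ‖y i‖ ^ 2 := by
    rw [← euclid_sum_sq y₂, ← Finset.sum_add_sum_compl S fun i => ‖y₂ i‖ ^ 2]
    have e1 : ∑ i ∈ S, ‖y₂ i‖ ^ 2 = 0 :=
      Finset.sum_eq_zero (fun i hi => by simp [hy₂, hi])
    have e2 : ∑ i ∈ Sᶜ, ‖y₂ i‖ ^ 2 = ∑ i ∈ Sᶜ, ‖y i‖ ^ 2 :=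
      Finset.sum_congr rfl (fun i hi => by simp [hy₂, (Finset.mem_compl.mp hi)])
    rw [e1, e2, zero_add]
  -- strict Cauchy-Schwarz comparison
  have hmain : ‖(inner ℂ u' v' : ℂ)‖ < ‖u'‖ * ‖v'‖ := by
    have h1 : ‖(inner ℂ u' v' : ℂ)‖ = ‖(inner ℂ x₂ y₂ : ℂ)‖ := by
      rw [hinner_u'v']
      have : (inner ℂ x₁ y₁ : ℂ) = - inner ℂ x₂ y₂ := by
        rw [hxy] at hinner_split
        linear_combination hinner_split
      rw [this, norm_neg]
    have h2 : ‖(inner ℂ x₂ y₂ : ℂ)‖ ≤ ‖x₂‖ * ‖y₂‖ := norm_inner_le_norm x₂ y₂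
    have h3 : (‖x₂‖ * ‖y₂‖) ^ 2 < (1:ℝ) / 4 := by
      rw [mul_pow, hx₂norm, hy₂norm]
      have hxn : 0 ≤ ∑ i ∈ Sᶜ, ‖x i‖ ^ 2 := Finset.sum_nonneg (fun i _ => by positivity)
      have hyn : 0 ≤ ∑ i ∈ Sᶜ, ‖y i‖ ^ 2 := Finset.sum_nonneg (fun i _ => by positivity)
      exact aux_mul_lt hxn hyn hxres hyres
    have h4 : (1:ℝ) / 4 < (‖u'‖ * ‖v'‖) ^ 2 := by
      rw [mul_pow]
      exact aux_lt_mul hu'norm hv'norm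
    have h5 : ‖(inner ℂ u' v' : ℂ)‖ ^ 2 < (‖u'‖ * ‖v'‖) ^ 2 := by
      rw [h1]
      calc ‖(inner ℂ x₂ y₂ : ℂ)‖ ^ 2 ≤ (‖x₂‖ * ‖y₂‖) ^ 2 :=
            pow_le_pow_left₀ (norm_nonneg _) h2 2
        _ < 1/4 := h3
        _ < _ := h4
    exact lt_of_pow_lt_pow_left₀ 2 (by positivity) h5
  -- linear independence
  have hu'0 : u' ≠ 0 := by
    intro h
    rw [h] at hu'norm
    simp at hu'norm
    linarith
  have hind : LinearIndependent ℂ ![u', v'] := by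
    rw [LinearIndependent.pair_iff' hu'0]
    intro a ha
    rw [← ha] at hmain
    rw [inner_smul_right, norm_mul, norm_smul] at hmain
    have : ‖(inner ℂ u' u' : ℂ)‖ = ‖u'‖ * ‖u'‖ := by
      rw [inner_self_eq_norm_sq_to_K, norm_pow]; simp [sq]
    rw [this] at hmain
    have : ‖a‖ * (‖a‖⁻¹ * ‖u'‖ * ‖u'‖) = ‖u'‖ * ‖u'‖ → True := fun _ => trivial
    nlinarith [norm_nonneg a, norm_nonneg u']
  -- conclude
  let w : Fin 2 → F := ![⟨u', hu'F⟩, ⟨v', hv'F⟩]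
  have hw : LinearIndependent ℂ w := by
    apply LinearIndependent.of_comp F.subtype
    have : F.subtype ∘ w = ![u', v'] := by
      funext i
      fin_cases i <;> rfl
    rw [this]
    exact hind
  simpa using hw.fintype_card_le_finrank
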